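/- Let O = {o1, o2, o3, o4} with A = {a1, a2}, and define the rule φ that assigns a1 her most-preferred object and assigns a2 her most-preferred object among the two objects least-preferred by a1. Then φ does not satisfy monotonic discoverability. -/

import Mathlib

open Classical

/-- `P'` is a continuation profile of `P` at allocation `μ` (i.e. `P' ∈ L(P, μ)`). -/
def InLowerContour {A O : Type*} (P : A → LinearOrder O) (μ : A → O)
    (P' : A → LinearOrder O) : Prop :=
  ∀ a : A, ∀ o o' : O, (P a).le (μ a) o → ((P a).lt o' o ↔ (P' a).lt o' o)

/-- Monotonic discoverability of a rule. -/
def MonotonicDiscoverability {A O : Type*} (φ : (A → LinearOrder O) → A → O) : Prop :=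
  ∀ (μ : A → O) (P : A → LinearOrder O),
    φ P = μ ∨ ∃ a : A, ∀ P' : A → LinearOrder O, InLowerContour P μ P' → φ P' a ≠ μ a

/-- The maximum of `s` under the linear order `L` (an arbitrary default if `s = ∅`). -/
noncomputable def topOf {α : Type*} (L : LinearOrder α) (s : Finset α) (d : α) : α :=
  WithBot.unbotD d (@Finset.max α L s)

/-- The two least-preferred objects under `L`. -/
noncomputable def bottomTwo (L : LinearOrder (Fin 4)) : Finset (Fin 4) :=
  Finset.univ.filter fun o => 2 ≤ (Finset.univ.filter fun o' => L.lt o o').card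

/-- `a1` gets her most-preferred object; `a2` gets her most-preferred object
among the two objects least-preferred by `a1`. -/
noncomputable def phiTwo (P : Fin 2 → LinearOrder (Fin 4)) : Fin 2 → Fin 4 := fun a =>
  if a = 0 then topOf (P 0) Finset.univ 0
  else topOf (P 1) (bottomTwo (P 0)) 0

/-- Rank function for agent 1's deviation: preferences 3 > 1 > 0 > 2. -/
def rankF : Fin 4 → Fin 4 := ![1, 2, 0, 3]

/-- The deviating linear order for agent 1. -/
noncomputable def Lf : LinearOrder (Fin 4) := LinearOrder.lift' rankF (by decide)

/-- The truthful profile: both agents prefer 3 > 2 > 1 > 0. -/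
noncomputable def Pex : Fin 2 → LinearOrder (Fin 4) := fun _ => inferInstance

/-- The target allocation. -/
def muEx : Fin 2 → Fin 4 := ![3, 2]

/-- The deviation profile: agent 0 reports `Lf`, agent 1 truthful. -/
noncomputable def Pdev : Fin 2 → LinearOrder (Fin 4) := fun a =>
  if a = 0 then Lf else inferInstance

lemma Pdev_inLowerContour : InLowerContour Pex muEx Pdev := by
  intro a o o' h
  fin_cases a
  · -- agent 0 : μ 0 = 3
    have key : ∀ (o o' : Fin 4), (3 : Fin 4) ≤ o → (o' < o ↔ rankF o' < rankF o) := by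
      decide
    exact key o o' h
  · exact Iff.rfl

lemma phiTwo_Pex_zero : phiTwo Pex 0 = 3 := by
  have : topOf (inferInstance : LinearOrder (Fin 4)) Finset.univ 0 = 3 := by decide
  simpa [phiTwo, Pex] using this

lemma phiTwo_Pex_one : phiTwo Pex 1 = 1 := by
  have h1 : bottomTwo (inferInstance : LinearOrder (Fin 4)) = {0, 1} := by decide
  have h2 : topOf (inferInstance : LinearOrder (Fin 4)) ({0, 1} : Finset (Fin 4)) 0 = 1 := by
    decide
  simp [phiTwo, Pex, h1, h2]

lemma phiTwo_Pdev_one : phiTwo Pdev 1 = 2 := by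
  have h1 : bottomTwo Lf = {0, 2} := by decide
  have h2 : topOf (inferInstance : LinearOrder (Fin 4)) ({0, 2} : Finset (Fin 4)) 0 = 2 := by
    decide
  simp [phiTwo, Pdev, h1, h2]

/-- The rule `φ` does not satisfy monotonic discoverability. -/
theorem phiTwo_not_monotonicDiscoverability : ¬ MonotonicDiscoverability phiTwo := by
  intro hMD
  rcases hMD muEx Pex with heq | ⟨a, ha⟩
  · have := congrFun heq 1
    rw [phiTwo_Pex_one] at this
    simp [muEx] at this
  · fin_cases a
    · refine ha Pex (fun a o o' _ => Iff.rfl) ?_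
      show phiTwo Pex 0 = muEx 0
      rw [phiTwo_Pex_zero]; rfl
    · refine ha Pdev Pdev_inLowerContour ?_
      show phiTwo Pdev 1 = muEx 1
      rw [phiTwo_Pdev_one]; rfl
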